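/- Let X = [0,4] be equipped with the usual metric and T : X → X defined by Tx = 2 if x ≤ 2 and Tx = 0 if x > 2. Then the function x ↦ M₁(x,2) does not tend to 0 as x → 2; indeed, for x ≤ 2 one has d(Tx,T·2) = 0 and 0 < M₁(x,2) whenever x ≠ 2, while for x > 2 one has d(Tx,T·2) = 2 and M₁(x,2) > 2. -/

import Mathlib

/-- The number `M₁(x,y)` associated to a self-mapping `T` of a metric space. -/
noncomputable def M1 {X : Type*} [MetricSpace X] (T : X → X) (x y : X) : ℝ :=
  max (max (max (dist x y) (dist x (T x)))
      (max (dist y (T y)) (dist x (T x) * dist y (T y) / (1 + dist x y))))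
    (dist x (T x) * dist y (T y) / (1 + dist (T x) (T y)))

/-- The self-mapping of `[0,4]` given by `Tx = 2` if `x ≤ 2` and `Tx = 0` if `x > 2`. -/
noncomputable def T14 : Set.Icc (0 : ℝ) 4 → Set.Icc (0 : ℝ) 4 :=
  fun x => if (x : ℝ) ≤ 2 then ⟨2, by norm_num⟩ else ⟨0, by norm_num⟩

lemma M1_le (x : Set.Icc (0:ℝ) 4) (hx : (x:ℝ) ≤ 2) :
    M1 T14 x ⟨2, by norm_num⟩ = 2 - x := by
  have h1 : T14 x = ⟨2, by norm_num⟩ := by simp [T14, hx]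
  have h2 : T14 ⟨2, by norm_num⟩ = ⟨2, by norm_num⟩ := by norm_num [T14]
  simp [M1, h1, h2, Subtype.dist_eq, Real.dist_eq, abs_of_nonpos (by linarith : (x:ℝ) - 2 ≤ 0)]
  exact hx

lemma M1_gt (x : Set.Icc (0:ℝ) 4) (hx : 2 < (x:ℝ)) :
    M1 T14 x ⟨2, by norm_num⟩ = x := by
  have h1 : T14 x = ⟨0, by norm_num⟩ := by simp [T14, not_le.mpr hx]
  have h2 : T14 ⟨2, by norm_num⟩ = ⟨2, by norm_num⟩ := by norm_num [T14]
  have hx0 : (0:ℝ) ≤ x := x.2.1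
  simp [M1, h1, h2, Subtype.dist_eq, Real.dist_eq,
    abs_of_nonneg (by linarith : (0:ℝ) ≤ (x:ℝ) - 2), abs_of_nonneg hx0]
  linarith

theorem stmt_14 :
    ¬ Filter.Tendsto (fun x : Set.Icc (0 : ℝ) 4 => M1 T14 x ⟨2, by norm_num⟩)
        (nhds ⟨2, by norm_num⟩) (nhds 0) ∧
    (∀ x : Set.Icc (0 : ℝ) 4, (x : ℝ) ≤ 2 →
      dist (T14 x) (T14 ⟨2, by norm_num⟩) = 0 ∧
        (x ≠ ⟨2, by norm_num⟩ → 0 < M1 T14 x ⟨2, by norm_num⟩)) ∧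
    (∀ x : Set.Icc (0 : ℝ) 4, 2 < (x : ℝ) →
      dist (T14 x) (T14 ⟨2, by norm_num⟩) = 2 ∧ 2 < M1 T14 x ⟨2, by norm_num⟩) := by
  have h2 : T14 ⟨2, by norm_num⟩ = ⟨2, by norm_num⟩ := by norm_num [T14]
  refine ⟨?_, ?_, ?_⟩
  · intro h
    set u : ℕ → Set.Icc (0:ℝ) 4 := fun n => ⟨2 + 1/(n+1), by
      constructor
      · positivity
      · have h1 : 1/((n:ℝ)+1) ≤ 1 := by
          rw [div_le_one (by positivity)]; linarith [Nat.cast_nonneg (α := ℝ) n]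
        linarith⟩ with hu
    have hcoe : Filter.Tendsto (fun n => (u n : ℝ)) Filter.atTop (nhds 2) := by
      have : Filter.Tendsto (fun n : ℕ => 1 / ((n : ℝ) + 1)) Filter.atTop (nhds 0) :=
        tendsto_one_div_add_atTop_nhds_zero_nat
      have h' := Filter.Tendsto.const_add (2:ℝ) this
      simpa [hu] using h'
    have hut : Filter.Tendsto u Filter.atTop (nhds ⟨2, by norm_num⟩) := by
      rw [tendsto_subtype_rng]
      exact hcoe
    have hM := h.comp hut
    have hlim : (0:ℝ) ≥ 2 := by
      refine ge_of_tendsto hM ?_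
      filter_upwards [Filter.eventually_ge_atTop 0] with n _
      have hun : 2 < ((u n : ℝ)) := by
        simp only [hu]
        have : (0:ℝ) < 1/((n:ℝ)+1) := by positivity
        linarith
      have := M1_gt (u n) hun
      simp only [Function.comp]
      rw [this]
      linarith
    linarith
  · intro x hx
    have h1 : T14 x = ⟨2, by norm_num⟩ := by simp [T14, hx]
    refine ⟨by simp [h1, h2], fun hne => ?_⟩
    rw [M1_le x hx]
    have : (x:ℝ) ≠ 2 := fun h => hne (Subtype.ext h)
    have : (x:ℝ) < 2 := lt_of_le_of_ne hx this
    linarith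
  · intro x hx
    have h1 : T14 x = ⟨0, by norm_num⟩ := by simp [T14, not_le.mpr hx]
    refine ⟨?_, ?_⟩
    · rw [h1, h2, Subtype.dist_eq, Real.dist_eq]; norm_num
    · rw [M1_gt x hx]; exact hx
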